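/- Let R be a commutative ℚ-algebra and D : R → R a ℚ-linear map satisfying D(x³) - 3x·D(x²) + 3x²·D(x) = 0 for all x ∈ R. Then for every x ∈ R and every natural number n ≥ 2, D(xⁿ) = C(n,2)·D(x²)·x^{n-2} - n(n-2)·D(x)·x^{n-1}. -/
import Mathlib

private theorem cancelNat' {R : Type*} [CommRing R] [Algebra ℚ R] {a b : R} (n : ℕ)
    (hn : (n:ℚ) ≠ 0) (h : (n:R) * a = (n:R) * b) : a = b := by
  have h' : (n:ℚ) • a = (n:ℚ) • b := by
    rw [Algebra.smul_def, Algebra.smul_def, map_natCast]; exact h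
  exact smul_right_injective R hn h'

private theorem key' {R : Type*} [CommRing R] [Algebra ℚ R] (D : R →ₗ[ℚ] R)
    (hD : ∀ x : R, D (x ^ 3) - 3 * x * D (x ^ 2) + 3 * x ^ 2 * D x = 0) (x y : R) :
    D (x^2 * y) = 2*x*D (x*y) + y*D (x^2) - x^2*D y - 2*(x*y)*D x := by
  have h1 := hD (x+y)
  have h2 := hD (x-y)
  have h3 := hD y
  have p3 : (x+y)^3 = x^3 + (3:ℚ) • (x^2*y) + ((3:ℚ) • (x*y^2) + y^3) := by
    simp only [Algebra.smul_def, map_ofNat]; ring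
  have p2 : (x+y)^2 = x^2 + (2:ℚ) • (x*y) + y^2 := by
    simp only [Algebra.smul_def, map_ofNat]; ring
  have q3 : (x-y)^3 = x^3 - (3:ℚ) • (x^2*y) + ((3:ℚ) • (x*y^2) - y^3) := by
    simp only [Algebra.smul_def, map_ofNat]; ring
  have q2 : (x-y)^2 = x^2 - (2:ℚ) • (x*y) + y^2 := by
    simp only [Algebra.smul_def, map_ofNat]; ring
  simp only [p3, p2, map_add, map_sub, map_smul] at h1
  simp only [Algebra.smul_def, map_ofNat] at h1
  simp only [q3, q2, map_add, map_sub, map_smul] at h2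
  simp only [Algebra.smul_def, map_ofNat] at h2
  apply cancelNat' 6 (by norm_num)
  push_cast
  linear_combination h1 - h2 - 2*h3

private theorem aux' {R : Type*} [CommRing R] [Algebra ℚ R] (D : R →ₗ[ℚ] R)
    (hD : ∀ x : R, D (x ^ 3) - 3 * x * D (x ^ 2) + 3 * x ^ 2 * D x = 0) (x : R) :
    ∀ m : ℕ, (2:R) * D (x^(m+2)) =
      ((m:R)+2)*((m:R)+1) * D (x^2) * x^m - 2*((m:R)+2)*(m:R) * D x * x^(m+1) := by
  intro m
  induction m using Nat.twoStepInduction with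
  | zero => push_cast; ring_nf
  | one =>
    have h := hD x
    push_cast
    linear_combination 2 * h
  | more m ih0 ih1 =>
    have hk := key' D hD x (x^(m+2))
    rw [show x^2*x^(m+2) = x^(m+2+2) from by ring,
        show x*x^(m+2) = x^(m+1+2) from by ring] at hk
    push_cast at ih0 ih1 ⊢
    linear_combination 2*hk + 2*x*ih1 - x^2*ih0

/-- If `D : R → R` is a ℚ-linear map on a commutative ℚ-algebra satisfying
`D(x³) - 3x·D(x²) + 3x²·D(x) = 0` for all `x`, then for all `x` and `n ≥ 2`,
`D(xⁿ) = C(n,2)·D(x²)·x^(n-2) - n(n-2)·D(x)·x^(n-1)`. -/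
theorem second_order_power_rule {R : Type*} [CommRing R] [Algebra ℚ R]
    (D : R →ₗ[ℚ] R)
    (hD : ∀ x : R, D (x ^ 3) - 3 * x * D (x ^ 2) + 3 * x ^ 2 * D x = 0) :
    ∀ (x : R) (n : ℕ), 2 ≤ n →
      D (x ^ n) = (n.choose 2 : R) * D (x ^ 2) * x ^ (n - 2)
        - ((n : R) * ((n : R) - 2)) * D x * x ^ (n - 1) := by
  intro x n hn
  obtain ⟨m, rfl⟩ : ∃ m, n = m + 2 := ⟨n - 2, by omega⟩
  have hc : 2 * ((m+2).choose 2) = (m+2)*(m+1) := by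
    rw [Nat.choose_two_right, show m+2-1 = m+1 from rfl]
    have he : 2 ∣ (m+2) * (m+1) := by
      have h := (Nat.even_mul_succ_self (m+1)).two_dvd
      rwa [Nat.mul_comm] at h
    rw [Nat.mul_div_cancel' he]
  have hc' : (2:R) * ((m+2).choose 2 : R) = ((m:R)+2) * ((m:R)+1) := by
    exact_mod_cast congrArg (Nat.cast : ℕ → R) hc
  rw [show m+2-2 = m from by omega, show m+2-1 = m+1 from by omega]
  apply cancelNat' 2 (by norm_num)
  have h := aux' D hD x m
  push_cast
  linear_combination h - D (x^2) * x^m * hc'
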